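/- For every monotone E3CNF formula φ with n variables and m clauses, the minimum number of tuples whose deletion from I_φ leaves an instance consistent with respect to {A → B, B → C} equals 3m − #τ_max(φ); that is, opt(I_φ) = 3m − #τ_max(φ). -/

import Mathlib

/-- A functional dependency `X → Y` is a pair of attribute sets; two tuples form a
`φ`-conflict if they agree on every attribute of `X` but differ on some attribute of `Y`. -/
def IsPhiConflict {α V : Type*} (X Y : Finset α) (s t : α → V) : Prop :=
  (∀ a ∈ X, s a = t a) ∧ (∃ a ∈ Y, s a ≠ t a)

instance {α V : Type*} [DecidableEq V] (X Y : Finset α) (s t : α → V) :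
    Decidable (IsPhiConflict X Y s t) := by
  unfold IsPhiConflict; infer_instance

/-- Two tuples form a conflict w.r.t. a finite FD set if they form a `φ`-conflict
for some FD `φ` of the set. -/
def IsConflict {α V : Type*} (FDs : Finset (Finset α × Finset α)) (s t : α → V) : Prop :=
  ∃ fd ∈ FDs, IsPhiConflict fd.1 fd.2 s t

instance {α V : Type*} [DecidableEq V] (FDs : Finset (Finset α × Finset α)) (s t : α → V) :
    Decidable (IsConflict FDs s t) := by
  unfold IsConflict; infer_instance

/-- A set of tuples is consistent w.r.t. an FD set if no two of its tuples form a conflict. -/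
def Consistent {α V : Type*} (FDs : Finset (Finset α × Finset α)) (J : Finset (α → V)) : Prop :=
  ∀ s ∈ J, ∀ t ∈ J, ¬ IsConflict FDs s t

/-- `opt FDs I` is the minimum of `dist(J,I) = |I| - |J|` over all consistent subsets `J ⊆ I`. -/
noncomputable def opt {α V : Type*} (FDs : Finset (Finset α × Finset α))
    (I : Finset (α → V)) : ℕ :=
  sInf {d : ℕ | ∃ J ⊆ I, Consistent FDs J ∧ d = I.card - J.card}

/-- A monotone E3CNF formula with `n` variables and `m` clauses: each clause has exactly
three literals over pairwise distinct variables and is monotone, i.e. all its literals have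
the same polarity `pol i` (`true` = all positive, `false` = all negative). -/
structure MonotoneE3CNF (n m : ℕ) where
  lit : Fin m → Fin 3 → Fin n
  pol : Fin m → Bool
  distinct : ∀ i, Function.Injective (lit i)

/-- The number of clauses satisfied by assignment `τ`. -/
def MonotoneE3CNF.numSat {n m : ℕ} (φ : MonotoneE3CNF n m) (τ : Fin n → Bool) : ℕ :=
  (Finset.univ.filter fun i : Fin m => ∃ k, τ (φ.lit i k) = φ.pol i).card

/-- `#τ_max(φ)`: the maximum number of simultaneously satisfiable clauses. -/
def MonotoneE3CNF.maxSat {n m : ℕ} (φ : MonotoneE3CNF n m) : ℕ :=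
  Finset.univ.sup fun τ : Fin n → Bool => φ.numSat τ

/-- Values used in the instance `I_φ`: clause indices `i`, variable indices `j`,
and for each variable `j` two constants `j⁺ = (j, true)` and `j⁻ = (j, false)`;
all pairwise distinct. -/
abbrev Val0 (n m : ℕ) := Sum (Fin m) (Sum (Fin n) (Fin n × Bool))

/-- The tuple built for the `k`-th literal of clause `i`: `(i, j, j⁺)` if the variable
`j = lit i k` occurs positively, `(i, j, j⁻)` if it occurs negatively. -/
def tuple0 {n m : ℕ} (φ : MonotoneE3CNF n m) (i : Fin m) (k : Fin 3) : Fin 3 → Val0 n m :=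
  ![Sum.inl i, Sum.inr (Sum.inl (φ.lit i k)), Sum.inr (Sum.inr (φ.lit i k, φ.pol i))]

/-- The instance `I_φ` over attributes `A = 0`, `B = 1`, `C = 2`. -/
def Iphi0 {n m : ℕ} (φ : MonotoneE3CNF n m) : Finset (Fin 3 → Val0 n m) :=
  Finset.univ.image fun p : Fin m × Fin 3 => tuple0 φ p.1 p.2

/-- The FD set `{A → B, B → C}`. -/
def Sigma0 : Finset (Finset (Fin 3) × Finset (Fin 3)) := {({0}, {1}), ({1}, {2})}

section AuxProof

variable {n m : ℕ}

lemma tuple0_zero (φ : MonotoneE3CNF n m) (i : Fin m) (k : Fin 3) :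
    tuple0 φ i k 0 = Sum.inl i := rfl

lemma tuple0_one (φ : MonotoneE3CNF n m) (i : Fin m) (k : Fin 3) :
    tuple0 φ i k 1 = Sum.inr (Sum.inl (φ.lit i k)) := rfl

lemma tuple0_two (φ : MonotoneE3CNF n m) (i : Fin m) (k : Fin 3) :
    tuple0 φ i k 2 = Sum.inr (Sum.inr (φ.lit i k, φ.pol i)) := rfl

lemma isConflict_iff {V : Type*} (s t : Fin 3 → V) :
    IsConflict Sigma0 s t ↔ (s 0 = t 0 ∧ s 1 ≠ t 1) ∨ (s 1 = t 1 ∧ s 2 ≠ t 2) := by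
  constructor
  · rintro ⟨fd, hfd, h1, a, ha, hne⟩
    simp only [Sigma0, Finset.mem_insert, Finset.mem_singleton] at hfd
    rcases hfd with rfl | rfl
    · simp only [Finset.mem_singleton] at ha
      subst ha
      exact Or.inl ⟨h1 0 (Finset.mem_singleton_self 0), hne⟩
    · simp only [Finset.mem_singleton] at ha
      subst ha
      exact Or.inr ⟨h1 1 (Finset.mem_singleton_self 1), hne⟩
  · rintro (⟨h1, h2⟩ | ⟨h1, h2⟩)
    · refine ⟨({0}, {1}), by simp [Sigma0], ?_, ⟨1, Finset.mem_singleton_self 1, h2⟩⟩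
      intro a ha
      simp only [Finset.mem_singleton] at ha
      subst ha; exact h1
    · refine ⟨({1}, {2}), by simp [Sigma0], ?_, ⟨2, Finset.mem_singleton_self 2, h2⟩⟩
      intro a ha
      simp only [Finset.mem_singleton] at ha
      subst ha; exact h1

lemma tuple0_injective (φ : MonotoneE3CNF n m) :
    Function.Injective (fun p : Fin m × Fin 3 => tuple0 φ p.1 p.2) := by
  rintro ⟨i, k⟩ ⟨i', k'⟩ h
  simp only at h
  have h0 : (Sum.inl i : Val0 n m) = Sum.inl i' := congrFun h 0
  obtain rfl : i = i' := by simpa using h0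
  have h1 : (Sum.inr (Sum.inl (φ.lit i k)) : Val0 n m) = Sum.inr (Sum.inl (φ.lit i k')) :=
    congrFun h 1
  have hk : φ.lit i k = φ.lit i k' := by simpa using h1
  cases φ.distinct i hk
  rfl

lemma card_Iphi0 (φ : MonotoneE3CNF n m) : (Iphi0 φ).card = 3 * m := by
  rw [Iphi0, Finset.card_image_of_injective _ (tuple0_injective φ)]
  simp [mul_comm]

lemma exists_good (φ : MonotoneE3CNF n m) :
    ∃ J ⊆ Iphi0 φ, Consistent Sigma0 J ∧ J.card = φ.maxSat := by
  classical
  obtain ⟨τ, -, hτ⟩ :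
      ∃ τ ∈ Finset.univ, (Finset.univ.sup fun τ : Fin n → Bool => φ.numSat τ) = φ.numSat τ :=
    Finset.exists_mem_eq_sup _ Finset.univ_nonempty _
  set S : Finset (Fin m) := Finset.univ.filter fun i => ∃ k, τ (φ.lit i k) = φ.pol i with hS
  set f : Fin m → (Fin 3 → Val0 n m) := fun i =>
    tuple0 φ i (if h : ∃ k, τ (φ.lit i k) = φ.pol i then h.choose else 0) with hf
  have hfS : ∀ i ∈ S, ∃ k, f i = tuple0 φ i k ∧ τ (φ.lit i k) = φ.pol i := by
    intro i hi
    rw [hS, Finset.mem_filter] at hi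
    obtain ⟨-, h⟩ := hi
    exact ⟨h.choose, by rw [hf]; simp only [dif_pos h], h.choose_spec⟩
  refine ⟨S.image f, ?_, ?_, ?_⟩
  · intro t ht
    obtain ⟨i, hi, rfl⟩ := Finset.mem_image.mp ht
    obtain ⟨k, hk, -⟩ := hfS i hi
    rw [hk, Iphi0]
    exact Finset.mem_image.mpr ⟨(i, k), Finset.mem_univ _, rfl⟩
  · intro s hs t ht hcon
    obtain ⟨i, hi, rfl⟩ := Finset.mem_image.mp hs
    obtain ⟨i', hi', rfl⟩ := Finset.mem_image.mp ht
    obtain ⟨k, hk, hτk⟩ := hfS i hi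
    obtain ⟨k', hk', hτk'⟩ := hfS i' hi'
    rw [hk, hk', isConflict_iff] at hcon
    rcases hcon with ⟨h1, h2⟩ | ⟨h1, h2⟩
    · rw [tuple0_zero, tuple0_zero] at h1
      obtain rfl : i = i' := by simpa using h1
      rw [tuple0_one, tuple0_one] at h2
      -- same clause chosen twice via the same choice function value, so k = k'
      have : k = k' := by
        rw [hk] at hk'
        have h1' := congrFun hk' 1
        simp only [tuple0_one, Sum.inr.injEq, Sum.inl.injEq] at h1'
        exact φ.distinct i h1'
      subst this
      exact h2 rfl
    · rw [tuple0_one, tuple0_one] at h1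
      have hj : φ.lit i k = φ.lit i' k' := by simpa using h1
      rw [tuple0_two, tuple0_two] at h2
      have hpol : φ.pol i = φ.pol i' := by
        rw [← hτk, ← hτk', hj]
      exact h2 (by rw [hj, hpol])
  · have hinj : Set.InjOn f S := by
      intro i hi i' hi' hfe
      obtain ⟨k, hk, -⟩ := hfS i hi
      obtain ⟨k', hk', -⟩ := hfS i' hi'
      rw [hk, hk'] at hfe
      have h0 := congrFun hfe 0
      rw [tuple0_zero, tuple0_zero] at h0
      exact Sum.inl_injective h0
    rw [Finset.card_image_of_injOn hinj, MonotoneE3CNF.maxSat, hτ]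
    rfl

lemma card_le_maxSat (φ : MonotoneE3CNF n m) {J : Finset (Fin 3 → Val0 n m)}
    (hJ : J ⊆ Iphi0 φ) (hc : Consistent Sigma0 J) : J.card ≤ φ.maxSat := by
  classical
  set τ : Fin n → Bool := fun j =>
    if ∃ t ∈ J, t 2 = Sum.inr (Sum.inr (j, true)) then true else false with hτdef
  have key : ∀ t ∈ J, ∃ i k, t = tuple0 φ i k ∧ τ (φ.lit i k) = φ.pol i := by
    intro t ht
    obtain ⟨⟨i, k⟩, -, rfl⟩ := Finset.mem_image.mp (hJ ht)
    refine ⟨i, k, rfl, ?_⟩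
    cases hpol : φ.pol i with
    | true =>
      rw [hτdef]
      simp only
      rw [if_pos]
      exact ⟨_, ht, by rw [tuple0_two, hpol]⟩
    | false =>
      rw [hτdef]
      simp only
      rw [if_neg]
      rintro ⟨s, hs, hs2⟩
      obtain ⟨⟨i', k'⟩, -, rfl⟩ := Finset.mem_image.mp (hJ hs)
      rw [tuple0_two] at hs2
      have hj : φ.lit i' k' = φ.lit i k ∧ φ.pol i' = true := by
        simpa using hs2
      refine hc _ hs _ ht ?_
      rw [isConflict_iff]
      refine Or.inr ⟨?_, ?_⟩
      · rw [tuple0_one, tuple0_one, hj.1]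
      · rw [tuple0_two, tuple0_two, hj.1, hj.2, hpol]
        simp
  have hle : J.card ≤ φ.numSat τ := by
    have hcard : φ.numSat τ =
        ((Finset.univ.filter fun i : Fin m => ∃ k, τ (φ.lit i k) = φ.pol i).image
          (Sum.inl : Fin m → Val0 n m)).card := by
      rw [Finset.card_image_of_injective _ Sum.inl_injective]
      rfl
    rw [hcard]
    apply Finset.card_le_card_of_injOn (fun t => t 0)
    · intro t ht
      obtain ⟨i, k, rfl, hik⟩ := key t ht
      simp only [tuple0_zero]
      exact Finset.mem_image.mpr ⟨i, Finset.mem_filter.mpr ⟨Finset.mem_univ _, k, hik⟩, rfl⟩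
    · intro s hs t ht h0
      obtain ⟨i, k, rfl, -⟩ := key s hs
      obtain ⟨i', k', rfl, -⟩ := key t ht
      have h0' : tuple0 φ i k 0 = tuple0 φ i' k' 0 := h0
      rw [tuple0_zero, tuple0_zero] at h0'
      obtain rfl : i = i' := by simpa using h0'
      by_cases hkk : k = k'
      · rw [hkk]
      · exfalso
        refine hc _ hs _ ht ?_
        rw [isConflict_iff]
        refine Or.inl ⟨rfl, ?_⟩
        rw [tuple0_one, tuple0_one]
        simp only [ne_eq, Sum.inr.injEq, Sum.inl.injEq]
        exact fun h => hkk (φ.distinct i h)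
  exact hle.trans (Finset.le_sup (Finset.mem_univ τ))

end AuxProof

/-- For every monotone E3CNF formula `φ` with `n` variables and `m` clauses,
`opt(I_φ) = 3m − #τ_max(φ)` with respect to `{A → B, B → C}`. -/
theorem stmt0 {n m : ℕ} (φ : MonotoneE3CNF n m) :
    opt Sigma0 (Iphi0 φ) = 3 * m - φ.maxSat := by
  obtain ⟨J0, hJ0, hc0, hcard0⟩ := exists_good φ
  have hmem : (3 * m - φ.maxSat) ∈
      {d : ℕ | ∃ J ⊆ Iphi0 φ, Consistent Sigma0 J ∧ d = (Iphi0 φ).card - J.card} :=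
    ⟨J0, hJ0, hc0, by rw [card_Iphi0, hcard0]⟩
  refine le_antisymm (Nat.sInf_le hmem) (le_csInf ⟨_, hmem⟩ ?_)
  rintro d ⟨J, hJ, hc, rfl⟩
  rw [card_Iphi0]
  exact Nat.sub_le_sub_left (card_le_maxSat φ hJ hc) _
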